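/- Let λ ≥ 0 and let f ∈ M_σ^λ(φ) have Taylor coefficients aₙ. If (1+λ)B₁ ≤ |B₁² + (1+λ)(B₁−B₂)|, then |a₂| ≤ B₁√B₁ / √( (1+λ)·|B₁² + (1+λ)(B₁−B₂)| ). -/

import Mathlib

open Metric Set

noncomputable section

/-- `f` is bi-univalent on the unit disk, with `g` the univalent analytic
continuation of `f⁻¹` to the unit disk. -/
def IsBiUnivalent (f g : ℂ → ℂ) : Prop :=
  DifferentiableOn ℂ f (ball 0 1) ∧ f 0 = 0 ∧ deriv f 0 = 1 ∧
  Set.InjOn f (ball 0 1) ∧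
  DifferentiableOn ℂ g (ball 0 1) ∧ Set.InjOn g (ball 0 1) ∧
  ∀ w : ℂ, ‖w‖ < 1/4 → f (g w) = w

/-- `φ` is an analytic univalent function on the unit disk with positive real
part there, normalized by `φ 0 = 1`. -/
def IsMaMinda (φ : ℂ → ℂ) : Prop :=
  DifferentiableOn ℂ φ (ball 0 1) ∧ Set.InjOn φ (ball 0 1) ∧ φ 0 = 1 ∧
  ∀ z ∈ ball (0:ℂ) 1, 0 < (φ z).re

/-- Membership in `M^λ(φ)`: `f` is normalized analytic on the unit disk and
`λ(1 + z f''(z)/f'(z)) + (1-λ) z f'(z)/f(z) ≺ φ(z)`. -/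
def MemMlam (lam : ℝ) (φ f : ℂ → ℂ) : Prop :=
  DifferentiableOn ℂ f (ball 0 1) ∧ f 0 = 0 ∧ deriv f 0 = 1 ∧
  ∃ ω : ℂ → ℂ, DifferentiableOn ℂ ω (ball 0 1) ∧ ω 0 = 0 ∧
    (∀ z ∈ ball (0:ℂ) 1, ω z ∈ ball (0:ℂ) 1) ∧
    ∀ z ∈ ball (0:ℂ) 1, z ≠ 0 →
      (lam : ℂ) * (1 + z * iteratedDeriv 2 f z / deriv f z)
        + (1 - (lam : ℂ)) * (z * deriv f z / f z) = φ (ω z)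


open Filter Topology

namespace Stmt6Aux


lemma analyticAt_deriv' {u : ℂ → ℂ} {x : ℂ} (h : AnalyticAt ℂ u x) :
    AnalyticAt ℂ (deriv u) x := by
  obtain ⟨s, hs, hsa⟩ := h.eventually_analyticAt.exists_mem
  exact (AnalyticOnNhd.deriv (fun y hy => hsa y hy)) x (mem_of_mem_nhds hs)

lemma itd2_eq (u : ℂ → ℂ) : iteratedDeriv 2 u = deriv (deriv u) := by
  rw [show (2:ℕ) = 1 + 1 from rfl, iteratedDeriv_succ, iteratedDeriv_one]

lemma itd3_eq (u : ℂ → ℂ) : iteratedDeriv 3 u = deriv (deriv (deriv u)) := by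
  rw [show (3:ℕ) = 2 + 1 from rfl, iteratedDeriv_succ, itd2_eq]

/-- Degree-3 jet data at `0` : values of the function and first three derivatives. -/
def HasJet (u : ℂ → ℂ) (d0 d1 d2 d3 : ℂ) : Prop :=
  AnalyticAt ℂ u 0 ∧ u 0 = d0 ∧ deriv u 0 = d1 ∧
    deriv (deriv u) 0 = d2 ∧ deriv (deriv (deriv u)) 0 = d3

namespace HasJet

variable {u v : ℂ → ℂ} {a0 a1 a2 a3 b0 b1 b2 b3 : ℂ}

lemma itd2' (h : HasJet u a0 a1 a2 a3) : iteratedDeriv 2 u 0 = a2 := by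
  rw [itd2_eq]; exact h.2.2.2.1

lemma itd3' (h : HasJet u a0 a1 a2 a3) : iteratedDeriv 3 u 0 = a3 := by
  rw [itd3_eq]; exact h.2.2.2.2

lemma congr_ev (h : HasJet u a0 a1 a2 a3) (hv : u =ᶠ[𝓝 0] v) :
    HasJet v a0 a1 a2 a3 := by
  refine ⟨h.1.congr hv, hv.symm.eq_of_nhds.trans h.2.1, (hv.symm.deriv_eq).trans h.2.2.1,
    ?_, ?_⟩
  · rw [(hv.symm.deriv.deriv_eq : deriv (deriv v) 0 = _)]; exact h.2.2.2.1
  · rw [(hv.symm.deriv.deriv.deriv_eq : deriv (deriv (deriv v)) 0 = _)]; exact h.2.2.2.2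

lemma deriv' (h : HasJet u a0 a1 a2 a3) :
    HasJet (deriv u) a1 a2 a3 (deriv (deriv (deriv (deriv u))) 0) :=
  ⟨analyticAt_deriv' h.1, h.2.2.1, h.2.2.2.1, h.2.2.2.2, rfl⟩

lemma id' : HasJet (fun z : ℂ => z) 0 1 0 0 := by
  refine ⟨analyticAt_id, rfl, by simp, ?_, ?_⟩ <;> simp [deriv_id']

lemma mul' (hu : HasJet u a0 a1 a2 a3) (hv : HasJet v b0 b1 b2 b3) :
    HasJet (fun z => u z * v z) (a0*b0) (a1*b0 + a0*b1) (a2*b0 + 2*(a1*b1) + a0*b2)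
      (a3*b0 + 3*(a2*b1) + 3*(a1*b2) + a0*b3) := by
  obtain ⟨hua, hu0, hu1, hu2, hu3⟩ := hu
  obtain ⟨hva, hv0, hv1, hv2, hv3⟩ := hv
  have Hu : HasDerivAt u a1 0 := by
    have := hua.differentiableAt.hasDerivAt; rwa [hu1] at this
  have Hdu : HasDerivAt (deriv u) a2 0 := by
    have := (analyticAt_deriv' hua).differentiableAt.hasDerivAt
    rwa [show deriv (deriv u) 0 = a2 from hu2] at this
  have Hddu : HasDerivAt (deriv (deriv u)) a3 0 := by
    have := (analyticAt_deriv' (analyticAt_deriv' hua)).differentiableAt.hasDerivAt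
    rwa [show deriv (deriv (deriv u)) 0 = a3 from hu3] at this
  have Hv : HasDerivAt v b1 0 := by
    have := hva.differentiableAt.hasDerivAt; rwa [hv1] at this
  have Hdv : HasDerivAt (deriv v) b2 0 := by
    have := (analyticAt_deriv' hva).differentiableAt.hasDerivAt
    rwa [show deriv (deriv v) 0 = b2 from hv2] at this
  have Hddv : HasDerivAt (deriv (deriv v)) b3 0 := by
    have := (analyticAt_deriv' (analyticAt_deriv' hva)).differentiableAt.hasDerivAt
    rwa [show deriv (deriv (deriv v)) 0 = b3 from hv3] at this
  have h1 : deriv (fun z => u z * v z) =ᶠ[𝓝 0]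
      fun z => deriv u z * v z + u z * deriv v z := by
    filter_upwards [hua.eventually_analyticAt, hva.eventually_analyticAt] with z hzu hzv
    exact deriv_mul hzu.differentiableAt hzv.differentiableAt
  have h2 : deriv (fun z => deriv u z * v z + u z * deriv v z) =ᶠ[𝓝 0]
      fun z => (deriv (deriv u) z * v z + 2*(deriv u z * deriv v z)) +
        u z * deriv (deriv v) z := by
    filter_upwards [hua.eventually_analyticAt, hva.eventually_analyticAt] with z hzu hzv
    have hzu' := (analyticAt_deriv' hzu).differentiableAt.hasDerivAt
    have hzv' := (analyticAt_deriv' hzv).differentiableAt.hasDerivAt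
    have := ((hzu'.fun_mul hzv.differentiableAt.hasDerivAt).fun_add
      (hzu.differentiableAt.hasDerivAt.fun_mul hzv')).deriv
    rw [this]; ring
  have hd1 : deriv (fun z => u z * v z) 0 = a1*b0 + a0*b1 := by
    rw [(Hu.fun_mul Hv).deriv, hu0, hv0]
  have hd2 : deriv (deriv (fun z => u z * v z)) 0 = a2*b0 + 2*(a1*b1) + a0*b2 := by
    rw [h1.deriv_eq, ((Hdu.fun_mul Hv).fun_add (Hu.fun_mul Hdv)).deriv, hu0, hv0, hu1, hv1]; ring
  have hd3 : deriv (deriv (deriv (fun z => u z * v z))) 0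
      = a3*b0 + 3*(a2*b1) + 3*(a1*b2) + a0*b3 := by
    rw [(h1.deriv.trans h2).deriv_eq,
      (((Hddu.fun_mul Hv).fun_add ((Hdu.fun_mul Hdv).const_mul 2)).fun_add (Hu.fun_mul Hddv)).deriv,
      hu0, hv0, hu1, hv1, hu2, hv2]
    ring
  exact ⟨hua.mul hva, by show u 0 * v 0 = _; rw [hu0, hv0], hd1, hd2, hd3⟩

lemma add' (hu : HasJet u a0 a1 a2 a3) (hv : HasJet v b0 b1 b2 b3) :
    HasJet (fun z => u z + v z) (a0+b0) (a1+b1) (a2+b2) (a3+b3) := by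
  obtain ⟨hua, hu0, hu1, hu2, hu3⟩ := hu
  obtain ⟨hva, hv0, hv1, hv2, hv3⟩ := hv
  have h1 : deriv (fun z => u z + v z) =ᶠ[𝓝 0] fun z => deriv u z + deriv v z := by
    filter_upwards [hua.eventually_analyticAt, hva.eventually_analyticAt] with z hzu hzv
    exact deriv_add hzu.differentiableAt hzv.differentiableAt
  have h2 : deriv (fun z => deriv u z + deriv v z) =ᶠ[𝓝 0]
      fun z => deriv (deriv u) z + deriv (deriv v) z := by
    filter_upwards [hua.eventually_analyticAt, hva.eventually_analyticAt] with z hzu hzv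
    exact deriv_add (analyticAt_deriv' hzu).differentiableAt
      (analyticAt_deriv' hzv).differentiableAt
  refine ⟨hua.add hva, by show u 0 + v 0 = _; rw [hu0, hv0],
    by rw [h1.eq_of_nhds]; show deriv u 0 + deriv v 0 = _; rw [hu1, hv1], ?_, ?_⟩
  · rw [h1.deriv_eq, h2.eq_of_nhds]
    show deriv (deriv u) 0 + deriv (deriv v) 0 = _
    rw [hu2, hv2]
  · rw [(h1.deriv.trans h2).deriv_eq,
      deriv_fun_add (analyticAt_deriv' (analyticAt_deriv' hua)).differentiableAt
        (analyticAt_deriv' (analyticAt_deriv' hva)).differentiableAt, hu3, hv3]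

lemma const_mul' (c : ℂ) (hu : HasJet u a0 a1 a2 a3) :
    HasJet (fun z => c * u z) (c*a0) (c*a1) (c*a2) (c*a3) := by
  obtain ⟨hua, hu0, hu1, hu2, hu3⟩ := hu
  have h1 : deriv (fun z => c * u z) =ᶠ[𝓝 0] fun z => c * deriv u z := by
    filter_upwards [hua.eventually_analyticAt] with z hzu
    exact deriv_const_mul c hzu.differentiableAt
  have h2 : deriv (fun z => c * deriv u z) =ᶠ[𝓝 0] fun z => c * deriv (deriv u) z := by
    filter_upwards [hua.eventually_analyticAt] with z hzu
    exact deriv_const_mul c (analyticAt_deriv' hzu).differentiableAt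
  refine ⟨analyticAt_const.mul hua, by show c * u 0 = _; rw [hu0],
    by rw [h1.eq_of_nhds]; show c * deriv u 0 = _; rw [hu1], ?_, ?_⟩
  · rw [h1.deriv_eq, h2.eq_of_nhds]
    show c * deriv (deriv u) 0 = _
    rw [hu2]
  · rw [(h1.deriv.trans h2).deriv_eq,
      deriv_const_mul c (analyticAt_deriv' (analyticAt_deriv' hua)).differentiableAt, hu3]

lemma comp' (hu : HasJet u a0 a1 a2 a3) (hv : HasJet v 0 b1 b2 b3) :
    HasJet (fun z => u (v z)) a0 (a1*b1) (a2*b1^2 + a1*b2)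
      (a3*b1^3 + 3*(a2*(b1*b2)) + a1*b3) := by
  obtain ⟨hua, hu0, hu1, hu2, hu3⟩ := hu
  obtain ⟨hva, hv0, hv1, hv2, hv3⟩ := hv
  rw [show (0:ℂ) = v 0 from hv0.symm] at hua hu0 hu1 hu2 hu3
  have Hv : HasDerivAt v b1 0 := by
    have := hva.differentiableAt.hasDerivAt; rwa [hv1] at this
  have Hdv : HasDerivAt (deriv v) b2 0 := by
    have := (analyticAt_deriv' hva).differentiableAt.hasDerivAt
    rwa [show deriv (deriv v) 0 = b2 from hv2] at this
  have Hddv : HasDerivAt (deriv (deriv v)) b3 0 := by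
    have := (analyticAt_deriv' (analyticAt_deriv' hva)).differentiableAt.hasDerivAt
    rwa [show deriv (deriv (deriv v)) 0 = b3 from hv3] at this
  have Hdu_v : HasDerivAt (deriv u) a2 (v 0) := by
    have := (analyticAt_deriv' hua).differentiableAt.hasDerivAt
    rwa [show deriv (deriv u) (v 0) = a2 from hu2] at this
  have Hddu_v : HasDerivAt (deriv (deriv u)) a3 (v 0) := by
    have := (analyticAt_deriv' (analyticAt_deriv' hua)).differentiableAt.hasDerivAt
    rwa [show deriv (deriv (deriv u)) (v 0) = a3 from hu3] at this
  have hEvU : ∀ᶠ z in 𝓝 (0:ℂ), AnalyticAt ℂ u (v z) :=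
    (hva.continuousAt : Tendsto v (𝓝 0) (𝓝 (v 0))).eventually hua.eventually_analyticAt
  have h1 : deriv (fun z => u (v z)) =ᶠ[𝓝 0] fun z => deriv u (v z) * deriv v z := by
    filter_upwards [hEvU, hva.eventually_analyticAt] with z hzu hzv
    exact (HasDerivAt.comp z hzu.differentiableAt.hasDerivAt
      hzv.differentiableAt.hasDerivAt).deriv
  have h2 : deriv (fun z => deriv u (v z) * deriv v z) =ᶠ[𝓝 0]
      fun z => deriv (deriv u) (v z) * deriv v z * deriv v z
        + deriv u (v z) * deriv (deriv v) z := by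
    filter_upwards [hEvU, hva.eventually_analyticAt] with z hzu hzv
    have K : HasDerivAt (fun w => deriv u (v w)) (deriv (deriv u) (v z) * deriv v z) z :=
      HasDerivAt.comp z (analyticAt_deriv' hzu).differentiableAt.hasDerivAt
        hzv.differentiableAt.hasDerivAt
    have := (K.fun_mul (analyticAt_deriv' hzv).differentiableAt.hasDerivAt).deriv
    rw [this]
  have hd1 : deriv (fun z => u (v z)) 0 = a1*b1 := by
    rw [h1.eq_of_nhds]
    show deriv u (v 0) * deriv v 0 = _
    rw [hu1, hv1]
  have hd2 : deriv (deriv (fun z => u (v z))) 0 = a2*b1^2 + a1*b2 := by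
    have K : HasDerivAt (fun w => deriv u (v w)) (a2 * b1) 0 := HasDerivAt.comp 0 Hdu_v Hv
    rw [h1.deriv_eq, (K.fun_mul Hdv).deriv, hu1, hv1]; ring
  have hd3 : deriv (deriv (deriv (fun z => u (v z)))) 0
      = a3*b1^3 + 3*(a2*(b1*b2)) + a1*b3 := by
    have K1 : HasDerivAt (fun w => deriv u (v w)) (a2 * b1) 0 := HasDerivAt.comp 0 Hdu_v Hv
    have K2 : HasDerivAt (fun w => deriv (deriv u) (v w)) (a3 * b1) 0 :=
      HasDerivAt.comp 0 Hddu_v Hv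
    rw [(h1.deriv.trans h2).deriv_eq, (((K2.fun_mul Hdv).fun_mul Hdv).fun_add (K1.fun_mul Hddv)).deriv,
      hu1, hu2, hv1, hv2]
    ring
  exact ⟨hua.comp hva, hu0, hd1, hd2, hd3⟩

end HasJet



/-- Möbius disc inequality. -/
lemma mobius_normSq (a w : ℂ) :
    Complex.normSq (1 - (starRingEnd ℂ) a * w) - Complex.normSq (w - a)
      = (1 - Complex.normSq a) * (1 - Complex.normSq w) := by
  have h : ((Complex.normSq (1 - (starRingEnd ℂ) a * w) : ℂ))
      - (Complex.normSq (w - a) : ℂ)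
      = ((1 - Complex.normSq a : ℝ) : ℂ) * ((1 - Complex.normSq w : ℝ) : ℂ) := by
    rw [← Complex.mul_conj, ← Complex.mul_conj]
    push_cast
    rw [← Complex.mul_conj, ← Complex.mul_conj]
    simp only [map_sub, map_mul, map_one, Complex.conj_conj]
    ring
  exact_mod_cast congrArg Complex.re h

lemma mobius_denom_ne (a w : ℂ) (ha : ‖a‖ < 1) (hw : ‖w‖ ≤ 1) :
    1 - (starRingEnd ℂ) a * w ≠ 0 := by
  intro h
  have : ‖(starRingEnd ℂ) a * w‖ = 1 := by
    have : (starRingEnd ℂ) a * w = 1 := by linear_combination -h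
    rw [this, norm_one]
  rw [norm_mul, Complex.norm_conj] at this
  nlinarith [norm_nonneg w, norm_nonneg a]

lemma mobius_maps (a w : ℂ) (ha : ‖a‖ < 1) (hw : ‖w‖ < 1) :
    ‖(w - a) / (1 - (starRingEnd ℂ) a * w)‖ < 1 := by
  have hd := mobius_denom_ne a w ha hw.le
  have hd' : 0 < ‖1 - (starRingEnd ℂ) a * w‖ := by
    simpa [norm_pos_iff] using hd
  rw [norm_div, div_lt_one hd']
  have h1 : Complex.normSq (w - a) < Complex.normSq (1 - (starRingEnd ℂ) a * w) := by
    have := mobius_normSq a w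
    have ha' : Complex.normSq a < 1 := by
      rw [← Complex.sq_norm]; nlinarith [norm_nonneg a]
    have hw' : Complex.normSq w < 1 := by
      rw [← Complex.sq_norm]; nlinarith [norm_nonneg w]
    nlinarith
  rw [← Complex.sq_norm, ← Complex.sq_norm] at h1
  nlinarith [norm_nonneg (w - a), norm_nonneg (1 - (starRingEnd ℂ) a * w)]

/-- Schwarz–Pick type bound for the second coefficient of a self-map of the disc
fixing `0` : with `ψ = dslope ω 0`, `|ψ'(0)| ≤ 1 - |ψ(0)|²`. -/
lemma coeff_two_bound (ω : ℂ → ℂ) (hd : DifferentiableOn ℂ ω (ball 0 1)) (h0 : ω 0 = 0)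
    (hm : MapsTo ω (ball 0 1) (ball 0 1)) :
    ‖deriv (dslope ω 0) 0‖ ≤ 1 - (‖dslope ω 0 0‖)^2 := by
  set ψ := dslope ω 0 with hψ
  have hmem : ball (0:ℂ) 1 ∈ 𝓝 (0:ℂ) := isOpen_ball.mem_nhds (mem_ball_self one_pos)
  have hψd : DifferentiableOn ℂ ψ (ball 0 1) := (Complex.differentiableOn_dslope hmem).mpr hd
  have hm' : MapsTo ω (ball 0 1) (ball (ω 0) 1) := by rwa [h0]
  have hb : ∀ z ∈ ball (0:ℂ) 1, ‖ψ z‖ ≤ 1 := by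
    intro z hz
    have := Complex.norm_dslope_le_div_of_mapsTo_ball hd (hm'.mono_right ball_subset_closedBall) hz
    simpa using this
  have hb0 : ‖ψ 0‖ ≤ 1 := hb 0 (mem_ball_self one_pos)
  rcases eq_or_lt_of_le hb0 with heq1 | hlt1
  · -- boundary case : ψ is constant
    have hmax : IsMaxOn (norm ∘ ψ) (ball 0 1) 0 := by
      intro z hz
      simp only [Function.comp_apply]
      rw [heq1]
      exact hb z hz
    have hconst := Complex.eqOn_of_isPreconnected_of_isMaxOn_norm
      (convex_ball (0:ℂ) 1).isPreconnected isOpen_ball hψd (mem_ball_self one_pos) hmax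
    have hev : ψ =ᶠ[𝓝 0] fun _ => ψ 0 :=
      Filter.eventuallyEq_of_mem hmem (fun z hz => hconst hz)
    rw [hev.deriv_eq, deriv_const]
    simp [heq1]
  · -- interior case : Möbius transform + Schwarz
    have hstrict : ∀ z ∈ ball (0:ℂ) 1, ‖ψ z‖ < 1 := by
      intro z hz
      rcases eq_or_lt_of_le (hb z hz) with heq | h; swap
      · exact h
      exfalso
      have hmax : IsMaxOn (norm ∘ ψ) (ball 0 1) z := by
        intro y hy
        simp only [Function.comp_apply]
        rw [heq]; exact hb y hy
      have hconst := Complex.eqOn_of_isPreconnected_of_isMaxOn_norm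
        (convex_ball (0:ℂ) 1).isPreconnected isOpen_ball hψd hz hmax
      have : ψ 0 = ψ z := hconst (mem_ball_self one_pos)
      rw [this, heq] at hlt1
      exact lt_irrefl _ hlt1
    set a := ψ 0 with haa
    have haA : ‖a‖ < 1 := hlt1
    set χ : ℂ → ℂ := fun z => (ψ z - a) / (1 - (starRingEnd ℂ) a * ψ z) with hχ
    have hχd : DifferentiableOn ℂ χ (ball 0 1) := by
      apply DifferentiableOn.div
      · exact hψd.sub_const a
      · exact (differentiableOn_const _).sub
          ((differentiableOn_const _).mul hψd)
      · intro z hz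
        exact mobius_denom_ne a (ψ z) haA (hb z hz)
    have hχ0 : χ 0 = 0 := by simp [hχ, haa]
    have hχm : MapsTo χ (ball 0 1) (ball 0 1) := by
      intro z hz
      rw [mem_ball_zero_iff]
      exact mobius_maps a (ψ z) haA (hstrict z hz)
    have hsch : ‖deriv χ 0‖ ≤ 1 :=
      Complex.norm_deriv_le_one_of_mapsTo_ball hχd
        (by rw [hχ0]; exact hχm.mono_right ball_subset_closedBall) one_pos
    -- compute deriv χ 0
    have hden0 : (1 : ℂ) - (starRingEnd ℂ) a * ψ 0 ≠ 0 :=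
      mobius_denom_ne a (ψ 0) haA hb0
    have hψdiff : DifferentiableAt ℂ ψ 0 := hψd.differentiableAt hmem
    have hnum : HasDerivAt (fun z => ψ z - a) (deriv ψ 0) 0 := by
      simpa using (hψdiff.hasDerivAt.sub_const a)
    have hden : HasDerivAt (fun z => (1:ℂ) - (starRingEnd ℂ) a * ψ z)
        (-((starRingEnd ℂ) a * deriv ψ 0)) 0 := by
      simpa using ((hψdiff.hasDerivAt.const_mul ((starRingEnd ℂ) a)).const_sub 1)
    have hder : deriv χ 0 = deriv ψ 0 / (1 - (starRingEnd ℂ) a * a) := by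
      rw [hχ]
      rw [(hnum.fun_div hden hden0).deriv]
      rw [show ψ 0 = a from rfl]
      field_simp [show (1:ℂ) - (starRingEnd ℂ) a * a ≠ 0 from hden0]
      ring
    have hkey : ‖deriv ψ 0‖ =
        ‖deriv χ 0‖ * (1 - Complex.normSq a) := by
      have h1 : (1:ℂ) - (starRingEnd ℂ) a * a = ((1 - Complex.normSq a : ℝ) : ℂ) := by
        push_cast
        rw [mul_comm, Complex.mul_conj]
      have hpos : (0:ℝ) < 1 - Complex.normSq a := by
        have : Complex.normSq a < 1 := by
          rw [← Complex.sq_norm]; nlinarith [norm_nonneg a]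
        linarith
      rw [hder, norm_div, h1, Complex.norm_real, Real.norm_eq_abs, abs_of_pos hpos]
      field_simp
    have hfin : ‖deriv ψ 0‖ ≤ 1 - Complex.normSq a := by
      rw [hkey]
      have hpos : (0:ℝ) ≤ 1 - Complex.normSq a := by
        have : Complex.normSq a < 1 := by
          rw [← Complex.sq_norm]; nlinarith [norm_nonneg a]
        linarith
      nlinarith [norm_nonneg (deriv χ 0)]
    rwa [← Complex.sq_norm a] at hfin



lemma extract (lam B₁r : ℝ) (B₂ : ℂ) (φ u : ℂ → ℂ)
    (hφa : AnalyticAt ℂ φ 0) (hφ0 : φ 0 = 1) (hφ1 : deriv φ 0 = (B₁r:ℂ))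
    (hφ2 : iteratedDeriv 2 φ 0 = 2*B₂)
    (hu : MemMlam lam φ u) :
    ∃ c₁ c₂ : ℂ,
      ‖c₂‖ ≤ 1 - (‖c₁‖)^2 ∧
      (2:ℂ) * (B₁r:ℂ) * c₁ = (1+(lam:ℂ)) * deriv (deriv u) 0 ∧
      ((2:ℂ)+4*(lam:ℂ)) * deriv (deriv (deriv u)) 0 + 3*(deriv (deriv u) 0)^2
        = 6*B₂*c₁^2 + 6*(B₁r:ℂ)*c₂ + 9*(B₁r:ℂ)*c₁*(deriv (deriv u) 0) := by
  obtain ⟨hud, hu0, hu1, ω, hωd, hω0, hωm, heqn⟩ := hu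
  have hmem : ball (0:ℂ) 1 ∈ 𝓝 (0:ℂ) := isOpen_ball.mem_nhds (mem_ball_self one_pos)
  have hua : AnalyticAt ℂ u 0 := hud.analyticAt hmem
  have hωa : AnalyticAt ℂ ω 0 := hωd.analyticAt hmem
  set ψ := dslope ω 0 with hψdef
  have hψa : AnalyticAt ℂ ψ 0 := ((Complex.differentiableOn_dslope hmem).mpr hωd).analyticAt hmem
  have hsch : ‖deriv ψ 0‖ ≤ 1 - (‖ψ 0‖)^2 :=
    coeff_two_bound ω hωd hω0 (fun z hz => hωm z hz)
  have Jψ : HasJet ψ (ψ 0) (deriv ψ 0) (deriv (deriv ψ) 0) (deriv (deriv (deriv ψ)) 0) :=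
    ⟨hψa, rfl, rfl, rfl, rfl⟩
  have hωfun : ω = fun z => z * ψ z := by
    funext z
    have h := sub_smul_dslope ω 0 z
    rw [hω0, sub_zero, sub_zero, smul_eq_mul] at h
    exact h.symm
  have Jω : HasJet ω 0 (ψ 0) (2*(deriv ψ 0)) (3*(deriv (deriv ψ) 0)) := by
    rw [hωfun]
    have J := HasJet.id'.mul' Jψ
    refine ⟨J.1, ?_, ?_, ?_, ?_⟩
    · rw [J.2.1]; ring
    · rw [J.2.2.1]; ring
    · rw [J.2.2.2.1]; ring
    · rw [J.2.2.2.2]; ring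
  have Jφ : HasJet φ 1 (B₁r:ℂ) (2*B₂) (deriv (deriv (deriv φ)) 0) := by
    refine ⟨hφa, hφ0, hφ1, ?_, rfl⟩
    rw [← itd2_eq]; exact hφ2
  have JP := Jφ.comp' Jω
  have Ju : HasJet u 0 1 (deriv (deriv u) 0) (deriv (deriv (deriv u)) 0) :=
    ⟨hua, hu0, hu1, rfl, rfl⟩
  have Jdu := Ju.deriv'
  have Jddu := Jdu.deriv'
  have J1 := (Ju.mul' Jdu).add' (HasJet.id'.mul' (Ju.mul' Jddu))
  have J2 := HasJet.id'.mul' (Jdu.mul' Jdu)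
  have JA := (J1.const_mul' (lam:ℂ)).add' (J2.const_mul' (1-(lam:ℂ)))
  have JR := JP.mul' (Ju.mul' Jdu)
  have hAR : (fun z => (lam:ℂ) * (u z * deriv u z + z * (u z * deriv (deriv u) z))
        + (1-(lam:ℂ)) * (z * (deriv u z * deriv u z)))
      =ᶠ[𝓝 (0:ℂ)] fun z => φ (ω z) * (u z * deriv u z) := by
    have hFcont : ContinuousAt (dslope u 0) 0 := continuousAt_dslope_same.mpr
      hua.differentiableAt
    have hFne : ∀ᶠ z in 𝓝 (0:ℂ), dslope u 0 z ≠ 0 := by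
      apply hFcont.eventually_ne
      rw [dslope_same, hu1]; exact one_ne_zero
    have hf'ne : ∀ᶠ z in 𝓝 (0:ℂ), deriv u z ≠ 0 := by
      apply (analyticAt_deriv' hua).continuousAt.eventually_ne
      rw [hu1]; exact one_ne_zero
    have hball : ∀ᶠ z in 𝓝 (0:ℂ), z ∈ ball (0:ℂ) 1 := hmem
    filter_upwards [hball, hFne, hf'ne] with z hz hF hf'
    by_cases hz0 : z = 0
    · subst hz0; simp [hu0]
    · have hfz : u z ≠ 0 := by
        have h := sub_smul_dslope u 0 z
        rw [hu0, sub_zero, sub_zero, smul_eq_mul] at h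
        rw [← h]
        exact mul_ne_zero hz0 hF
      have h := heqn z hz hz0
      rw [itd2_eq] at h
      have h2 : ((lam:ℂ) * (1 + z * deriv (deriv u) z / deriv u z)
          + (1 - (lam:ℂ)) * (z * deriv u z / u z)) * (u z * deriv u z)
          = φ (ω z) * (u z * deriv u z) := by rw [h]
      rw [← h2]
      field_simp
  have JA' := JA.congr_ev hAR
  have eq2 := JA'.2.2.2.1.symm.trans JR.2.2.2.1
  have eq3 := JA'.2.2.2.2.symm.trans JR.2.2.2.2
  refine ⟨ψ 0, deriv ψ 0, hsch, by linear_combination -eq2, by linear_combination eq3⟩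

end Stmt6Aux

theorem stmt_6
    (lam : ℝ) (hlam : 0 ≤ lam) (φ f g : ℂ → ℂ)
    (B₁ : ℝ) (B₂ B₃ : ℂ) (hB₁ : 0 < B₁)
    (hφ : IsMaMinda φ)
    (hφ1 : deriv φ 0 = (B₁:ℂ))
    (hφ2 : iteratedDeriv 2 φ 0 = 2 * B₂)
    (hφ3 : iteratedDeriv 3 φ 0 = 6 * B₃)
    (hbi : IsBiUnivalent f g)
    (hf : MemMlam lam φ f) (hg : MemMlam lam φ g)
    (a : ℕ → ℂ) (ha : ∀ n, a n = iteratedDeriv n f 0 / (n.factorial : ℂ))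
    (D₁ : ℂ) (hD₁ : D₁ = (B₁:ℂ)^2 + (1 + (lam:ℂ)) * ((B₁:ℂ) - B₂))
    (hcond : (1 + lam) * B₁ ≤ ‖D₁‖) :
    ‖a 2‖ ≤ B₁ * Real.sqrt B₁ / Real.sqrt ((1 + lam) * ‖D₁‖) := by
  classical
  obtain ⟨hφd, hφinj, hφ0, hφpos⟩ := hφ
  have hmem : ball (0:ℂ) 1 ∈ 𝓝 (0:ℂ) := isOpen_ball.mem_nhds (mem_ball_self one_pos)
  have hφa : AnalyticAt ℂ φ 0 := hφd.analyticAt hmem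
  obtain ⟨c₁, c₂, hc2b, hfe1, hfe2⟩ := Stmt6Aux.extract lam B₁ B₂ φ f hφa hφ0 hφ1 hφ2 hf
  obtain ⟨k₁, k₂, hk2b, hge1, hge2⟩ := Stmt6Aux.extract lam B₁ B₂ φ g hφa hφ0 hφ1 hφ2 hg
  have hfa : AnalyticAt ℂ f 0 := hf.1.analyticAt hmem
  have hga : AnalyticAt ℂ g 0 := hg.1.analyticAt hmem
  set d2 := deriv (deriv f) 0 with hd2def
  set d3 := deriv (deriv (deriv f)) 0 with hd3def
  set D2 := deriv (deriv g) 0 with hD2def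
  set D3 := deriv (deriv (deriv g)) 0 with hD3def
  have Jf : Stmt6Aux.HasJet f 0 1 d2 d3 := ⟨hfa, hf.2.1, hf.2.2.1, rfl, rfl⟩
  have Jg : Stmt6Aux.HasJet g 0 1 D2 D3 := ⟨hga, hg.2.1, hg.2.2.1, rfl, rfl⟩
  have Jfg := Jf.comp' Jg
  have hev : (fun w => f (g w)) =ᶠ[𝓝 (0:ℂ)] fun w : ℂ => w := by
    have h14 : ball (0:ℂ) (1/4) ∈ 𝓝 (0:ℂ) := isOpen_ball.mem_nhds
      (mem_ball_self (by norm_num))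
    filter_upwards [h14] with w hw
    exact hbi.2.2.2.2.2.2 w (mem_ball_zero_iff.mp hw)
  have Jid := Jfg.congr_ev hev
  have eqC2 := Jid.2.2.2.1.symm.trans (Stmt6Aux.HasJet.id'.2.2.2.1)
  have eqC3 := Jid.2.2.2.2.symm.trans (Stmt6Aux.HasJet.id'.2.2.2.2)
  -- basic coefficient facts
  have ha2' : d2 = 2 * a 2 := by
    have h2 : iteratedDeriv 2 f 0 = d2 := by rw [Stmt6Aux.itd2_eq]
    rw [ha 2, h2]
    norm_num [Nat.factorial]
    ring
  -- eliminate the inverse-function data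
  have hD2 : D2 = -d2 := by linear_combination eqC2
  have hD3 : D3 = 3*d2^2 - d3 := by linear_combination eqC3 - 3*d2*hD2
  have hB1ne : ((B₁:ℝ):ℂ) ≠ 0 := by
    simp only [ne_eq, Complex.ofReal_eq_zero]
    exact hB₁.ne'
  have hk1 : k₁ = -c₁ := by
    have h3 : (2*(B₁:ℂ)) * k₁ = (2*(B₁:ℂ)) * (-c₁) := by
      linear_combination hge1 + hfe1 + (1+(lam:ℂ)) * hD2
    exact mul_left_cancel₀ (by simpa using hB1ne) h3
  have hsum : ((2:ℂ)+4*(lam:ℂ))*(3*d2^2) + 6*d2^2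
      = 12*B₂*c₁^2 + 6*(B₁:ℂ)*(c₂+k₂) + 18*(B₁:ℂ)*c₁*d2 := by
    linear_combination hfe2 + hge2 - ((2:ℂ)+4*(lam:ℂ))*hD3
      - (3*(D2 - d2))*hD2 + (6*B₂*(k₁ - c₁))*hk1 - 9*(B₁:ℂ)*d2*hk1 + 9*(B₁:ℂ)*k₁*hD2
  have sq : 4*(B₁:ℂ)^2*c₁^2 = ((1+(lam:ℂ))*d2)^2 := by
    linear_combination (2*(B₁:ℂ)*c₁ + (1+(lam:ℂ))*d2) * hfe1
  have KEY : 2 * (a 2)^2 * (((1+lam : ℝ)):ℂ) * ((B₁:ℂ)^2 - (((1+lam:ℝ)):ℂ) * B₂)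
      = ((B₁:ℂ))^3 * (c₂ + k₂) := by
    have KEY' : (1+(lam:ℂ))*d2^2*((B₁:ℂ)^2 - (1+(lam:ℂ))*B₂)
        = 2*(B₁:ℂ)^3*(c₂+k₂) := by
      linear_combination ((B₁:ℂ)^2/3)*hsum + B₂*sq + 3*(B₁:ℂ)^2*d2*hfe1
    push_cast
    linear_combination KEY'/2 - ((1+(lam:ℂ))*((B₁:ℂ)^2 - (1+(lam:ℂ))*B₂)*(d2 + 2*a 2)/2) * ha2'
  -- pass to absolute values
  set t := ‖a 2‖ with htdef
  have ht0 : 0 ≤ t := norm_nonneg _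
  have h1lam : (0:ℝ) < 1 + lam := by linarith
  have habs1 : (1+lam) * t = B₁ * ‖c₁‖ := by
    have h : (((1+lam : ℝ)):ℂ) * (a 2) = ((B₁:ℝ):ℂ) * c₁ := by
      push_cast
      linear_combination -hfe1/2 - ((1+(lam:ℂ))/2) * ha2'
    have := congrArg norm h
    rwa [norm_mul, norm_mul, Complex.norm_real, Complex.norm_real, Real.norm_eq_abs, Real.norm_eq_abs,
      abs_of_pos h1lam, abs_of_pos hB₁] at this
  have hk1abs : ‖k₁‖ = ‖c₁‖ := by simp [hk1]
  have habsKEY : 2 * t^2 * (1+lam) * ‖(B₁:ℂ)^2 - (((1+lam:ℝ)):ℂ) * B₂‖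
      = B₁^3 * ‖c₂+k₂‖ := by
    have h := congrArg norm KEY
    simp only [norm_mul, norm_pow, Complex.norm_real, Real.norm_eq_abs, Complex.norm_two] at h
    rw [abs_of_pos h1lam, abs_of_pos hB₁, ← htdef] at h
    linarith [h]
  set M := ‖(B₁:ℂ)^2 - (((1+lam:ℝ)):ℂ) * B₂‖ with hMdef
  have hM0 : 0 ≤ M := norm_nonneg _
  have hck : ‖c₂+k₂‖ ≤ 2 - 2*(‖c₁‖)^2 := by
    have := norm_add_le c₂ k₂
    rw [hk1abs] at hk2b
    linarith
  have hstep : t^2 * (1+lam) * (M + (1+lam)*B₁) ≤ B₁^3 := by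
    have h1 : 2 * t^2 * (1+lam) * M ≤ B₁^3 * (2 - 2*(‖c₁‖)^2) := by
      rw [habsKEY]
      have hB3 : (0:ℝ) < B₁^3 := by positivity
      nlinarith [hck]
    have h2 : B₁^2 * (‖c₁‖)^2 = (1+lam)^2 * t^2 := by
      linear_combination (-(1+lam)*t - B₁*‖c₁‖) * habs1
    nlinarith [h1, h2, hB₁]
  have htri : ‖D₁‖ ≤ M + (1+lam)*B₁ := by
    have hD1' : D₁ = ((B₁:ℂ)^2 - (((1+lam:ℝ)):ℂ) * B₂) + (((1+lam)*B₁ : ℝ):ℂ) := by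
      rw [hD₁]; push_cast; ring
    rw [hD1']
    refine (norm_add_le _ _).trans ?_
    rw [Complex.norm_real, Real.norm_eq_abs, abs_of_pos (by positivity)]
  have hfinal : t^2 * ((1+lam) * ‖D₁‖) ≤ B₁^3 := by
    have hmono : t^2 * ((1+lam) * ‖D₁‖) ≤ t^2 * ((1+lam) * (M + (1+lam)*B₁)) := by
      have := mul_le_mul_of_nonneg_left htri h1lam.le
      nlinarith [sq_nonneg t]
    calc t^2 * ((1+lam) * ‖D₁‖) ≤ t^2 * ((1+lam) * (M + (1+lam)*B₁)) := hmono
    _ = t^2 * (1+lam) * (M + (1+lam)*B₁) := by ring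
    _ ≤ B₁^3 := hstep
  have hDpos : 0 < (1+lam) * ‖D₁‖ := by
    have : B₁ ≤ (1+lam)*B₁ := by nlinarith
    have hD1pos : 0 < ‖D₁‖ := lt_of_lt_of_le (by linarith : (0:ℝ) < (1+lam)*B₁) hcond
    positivity
  have ht2 : t^2 ≤ B₁^3 / ((1+lam) * ‖D₁‖) := by
    rw [le_div_iff₀ hDpos]
    exact hfinal
  have hts : t ≤ Real.sqrt (B₁^3 / ((1+lam) * ‖D₁‖)) := by
    have := Real.sqrt_le_sqrt ht2
    rwa [Real.sqrt_sq ht0] at this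
  refine hts.trans_eq ?_
  rw [Real.sqrt_div (by positivity : (0:ℝ) ≤ B₁^3),
    show B₁^3 = B₁^2 * B₁ by ring, Real.sqrt_mul (sq_nonneg B₁), Real.sqrt_sq hB₁.le]
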